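/- Let 0 < K ≤ 1. Then for every b ∈ ℝ the equation m = tanh(K·m + b) has exactly one real solution; in particular, for b = 0 the unique solution is m = 0. -/

import Mathlib

open Real

private lemma tanh_hasDerivAt (x : ℝ) :
    HasDerivAt Real.tanh (1 - Real.tanh x ^ 2) x := by
  have h : HasDerivAt (fun y => Real.sinh y / Real.cosh y)
      ((Real.cosh x * Real.cosh x - Real.sinh x * Real.sinh x) / Real.cosh x ^ 2) x :=
    (Real.hasDerivAt_sinh x).div (Real.hasDerivAt_cosh x) (Real.cosh_pos x).ne'
  have heq : (Real.cosh x * Real.cosh x - Real.sinh x * Real.sinh x) / Real.cosh x ^ 2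
      = 1 - Real.tanh x ^ 2 := by
    rw [Real.tanh_eq_sinh_div_cosh, div_pow, eq_sub_iff_add_eq, ← add_div,
      div_eq_one_iff_eq (by positivity)]
    have := Real.cosh_sq_sub_sinh_sq x
    ring_nf
  rw [heq] at h
  exact h.congr_of_eventuallyEq (by filter_upwards with y using (Real.tanh_eq_sinh_div_cosh y))

private lemma tanh_lt_one' (x : ℝ) : Real.tanh x < 1 := by
  rw [Real.tanh_eq_sinh_div_cosh, div_lt_one (Real.cosh_pos x)]
  nlinarith [Real.cosh_sub_sinh x, Real.exp_pos (-x)]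

private lemma neg_one_lt_tanh' (x : ℝ) : -1 < Real.tanh x := by
  rw [Real.tanh_eq_sinh_div_cosh, lt_div_iff₀ (Real.cosh_pos x)]
  nlinarith [Real.sinh_add_cosh x, Real.exp_pos x]

private lemma continuous_tanh' : Continuous Real.tanh := by
  have : Real.tanh = fun x => Real.sinh x / Real.cosh x := by
    funext x; exact Real.tanh_eq_sinh_div_cosh x
  rw [this]
  exact Real.continuous_sinh.div Real.continuous_cosh (fun x => (Real.cosh_pos x).ne')

private lemma tanh_eq_zero_iff' {x : ℝ} : Real.tanh x = 0 ↔ x = 0 := by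
  rw [Real.tanh_eq_sinh_div_cosh, div_eq_zero_iff]
  simp [(Real.cosh_pos x).ne', Real.sinh_eq_zero]

/-- `x ↦ x - tanh x` is strictly monotone. -/
private lemma strictMono_id_sub_tanh : StrictMono (fun x : ℝ => x - Real.tanh x) := by
  set h : ℝ → ℝ := fun x => x - Real.tanh x with hh
  have hder : ∀ x : ℝ, HasDerivAt h (Real.tanh x ^ 2) x := by
    intro x
    have := (hasDerivAt_id x).sub (tanh_hasDerivAt x)
    exact this.congr_deriv (by ring)
  have hcont : Continuous h := continuous_id.sub continuous_tanh'
  have hIci : StrictMonoOn h (Set.Ici 0) := by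
    apply strictMonoOn_of_deriv_pos (convex_Ici 0) hcont.continuousOn
    intro x hx
    rw [interior_Ici] at hx
    rw [(hder x).deriv]
    have : Real.tanh x ≠ 0 := tanh_eq_zero_iff'.not.mpr (ne_of_gt hx)
    positivity
  have hIic : StrictMonoOn h (Set.Iic 0) := by
    apply strictMonoOn_of_deriv_pos (convex_Iic 0) hcont.continuousOn
    intro x hx
    rw [interior_Iic] at hx
    rw [(hder x).deriv]
    have : Real.tanh x ≠ 0 := tanh_eq_zero_iff'.not.mpr (ne_of_lt hx)
    positivity
  intro a b hab
  rcases le_or_gt 0 a with ha | ha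
  · exact hIci ha (le_trans ha hab.le) hab
  · rcases le_or_gt b 0 with hb | hb
    · exact hIic ha.le hb hab
    · calc h a < h 0 := hIic ha.le Set.self_mem_Iic ha
        _ < h b := hIci Set.self_mem_Ici hb.le hb

/-- For `0 < K ≤ 1`, the Curie–Weiss mean-field equation `m = tanh(K m + b)` has
exactly one real solution for every `b`, and for `b = 0` the unique solution is `0`. -/
theorem curie_weiss_unique_solution
    (K : ℝ) (hK0 : 0 < K) (hK1 : K ≤ 1) :
    (∀ b : ℝ, ∃! m : ℝ, m = Real.tanh (K * m + b)) ∧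
      (∀ m : ℝ, m = Real.tanh (K * m + 0) → m = 0) := by
  -- uniqueness: any two solutions coincide
  have uniq : ∀ b m₁ m₂ : ℝ, m₁ = Real.tanh (K * m₁ + b) → m₂ = Real.tanh (K * m₂ + b) →
      m₁ = m₂ := by
    intro b m₁ m₂ h₁ h₂
    by_contra hne
    -- WLOG via cases
    wlog hlt : m₁ < m₂ generalizing m₁ m₂
    · exact this m₂ m₁ h₂ h₁ (Ne.symm hne) (lt_of_le_of_ne (not_lt.mp hlt) (Ne.symm hne))
    have hu : K * m₁ + b < K * m₂ + b := by nlinarith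
    have := strictMono_id_sub_tanh hu
    simp only [← h₁, ← h₂] at this
    nlinarith
  refine ⟨fun b => ?_, fun m hm => uniq 0 m 0 hm (by simp [Real.tanh_zero])⟩
  -- existence via intermediate value theorem
  set M : ℝ := 2 + |b| / K with hM
  have hMpos : (0 : ℝ) < M := by positivity
  set g : ℝ → ℝ := fun x => Real.tanh (K * x + b) - x with hg
  have hgc : Continuous g :=
    (continuous_tanh'.comp ((continuous_const.mul continuous_id).add continuous_const)).sub continuous_id
  have hgM : g M < 0 := by
    have h1 : Real.tanh (K * M + b) < 1 := tanh_lt_one' _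
    have : (1 : ℝ) ≤ M := by
      rw [hM]; have : 0 ≤ |b| / K := by positivity
      linarith
    simp only [hg]; linarith
  have hgmM : 0 < g (-M) := by
    have h1 : -1 < Real.tanh (K * (-M) + b) := neg_one_lt_tanh' _
    have : (1 : ℝ) ≤ M := by
      rw [hM]; have : 0 ≤ |b| / K := by positivity
      linarith
    simp only [hg]; linarith
  have hsub : Set.Icc (g M) (g (-M)) ⊆ g '' Set.Icc (-M) M :=
    intermediate_value_Icc' (by linarith) hgc.continuousOn
  have h0 : (0 : ℝ) ∈ Set.Icc (g M) (g (-M)) := ⟨hgM.le, hgmM.le⟩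
  obtain ⟨m, _, hm⟩ := hsub h0
  have hm' : m = Real.tanh (K * m + b) := by
    have : Real.tanh (K * m + b) - m = 0 := hm
    linarith
  exact ⟨m, hm', fun y hy => uniq b y m hy hm'⟩
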